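/- For Poole's broken-arm theory AT_arm = ({w ⇒ ¬r}, {l ∨ r, w}): the argument A = ⟨⟨⟨w⟩ ⇒ ¬r⟩, ⟨l ∨ r⟩ → l⟩ is a well-formed consistent argument (†A ⊬ ⊥, noting ¬r, l∨r ⊢ l classically), no argument in the framework attacks A, and hence A belongs to every complete extension of the associated SAF, so l is a grounded consequence. -/

import Mathlib

/-- Propositional formulas over countably many atoms. -/
inductive PForm where
  | atom : ℕ → PForm
  | top : PForm
  | bot : PForm
  | neg : PForm → PForm
  | conj : PForm → PForm → PForm
  | disj : PForm → PForm → PForm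
  deriving DecidableEq

/-- Classical evaluation of a formula under a valuation. -/
def PForm.eval (v : ℕ → Prop) : PForm → Prop
  | .atom n => v n
  | .top => True
  | .bot => False
  | .neg φ => ¬ φ.eval v
  | .conj φ ψ => φ.eval v ∧ ψ.eval v
  | .disj φ ψ => φ.eval v ∨ ψ.eval v

/-- Classical (semantic) consequence: `Γ ⊢ φ`. -/
def Entails (Γ : Set PForm) (φ : PForm) : Prop :=
  ∀ v : ℕ → Prop, (∀ ψ ∈ Γ, ψ.eval v) → φ.eval v

/-- Conjunction of a list of formulas. -/
def conjList : List PForm → PForm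
  | [] => .top
  | [φ] => φ
  | φ :: rest => .conj φ (conjList rest)

/-- Disjunction of a list of formulas. -/
def disjList : List PForm → PForm
  | [] => .bot
  | [φ] => φ
  | φ :: rest => .disj φ (disjList rest)

/-- A defeasible rule: antecedents and a consequent. -/
abbrev Rule := List PForm × PForm

/-- Arguments: premise arguments, strict-rule applications, defeasible-rule
applications, and rbc-arguments `⟨A₁,[A₂],…,[Aₙ] ⇝ φ⟩`, where each bracketed
hypothetical argument is stored together with its assumption ψᵢ. -/
inductive Arg where
  | prem : PForm → Arg
  | strict : List Arg → PForm → Arg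
  | defeas : List Arg → PForm → Arg
  | rbc : Arg → List (Arg × PForm) → PForm → Arg

/-- The conclusion of an argument. -/
def Conc : Arg → PForm
  | .prem φ => φ
  | .strict _ φ => φ
  | .defeas _ φ => φ
  | .rbc _ _ φ => φ

mutual
/-- The formula `†A` associated with an argument `A`. -/
def dagger : Arg → PForm
  | .prem φ => φ
  | .strict as φ => conjList (φ :: daggerList as)
  | .defeas as φ => conjList (φ :: daggerList as)
  | .rbc a bs φ => .conj φ (.conj (dagger a) (disjList (daggerPairs bs)))
def daggerList : List Arg → List PForm
  | [] => []
  | a :: as => dagger a :: daggerList as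
def daggerPairs : List (Arg × PForm) → List PForm
  | [] => []
  | b :: bs => dagger b.1 :: daggerPairs bs
end

mutual
/-- The sub-arguments of an argument. -/
def subArgs : Arg → List Arg
  | .prem φ => [.prem φ]
  | .strict as φ => .strict as φ :: subArgsList as
  | .defeas as φ => .defeas as φ :: subArgsList as
  | .rbc a bs φ => .rbc a bs φ :: subArgs a
def subArgsList : List Arg → List Arg
  | [] => []
  | a :: as => subArgs a ++ subArgsList as
end

mutual
/-- The hypothetical sub-arguments of an argument: pairs of an argument and
the assumption it is based on. -/
def hsubArgs : Arg → List (Arg × PForm)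
  | .prem _ => []
  | .strict as _ => hsubArgsList as
  | .defeas as _ => hsubArgsList as
  | .rbc a bs _ => hsubArgs a ++ bs
def hsubArgsList : List Arg → List (Arg × PForm)
  | [] => []
  | a :: as => hsubArgs a ++ hsubArgsList as
end

/-- Well-formed arguments over the defeasible rules `D` and knowledge base `F`
(with strict rules given by classical consequence). -/
inductive WF (D : Set Rule) : Set PForm → Arg → Prop
  | prem {F : Set PForm} {φ : PForm} : φ ∈ F → WF D F (.prem φ)
  | strict {F : Set PForm} {as : List Arg} {φ : PForm} :
      (∀ a ∈ as, WF D F a) →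
      Entails {ψ | ∃ a ∈ as, Conc a = ψ} φ →
      WF D F (.strict as φ)
  | defeas {F : Set PForm} {as : List Arg} {φ : PForm} :
      (∀ a ∈ as, WF D F a) →
      (as.map Conc, φ) ∈ D →
      WF D F (.defeas as φ)
  | rbc {F : Set PForm} {a : Arg} {bs : List (Arg × PForm)} {φ : PForm} :
      WF D F a →
      2 ≤ bs.length →
      Conc a = disjList (bs.map Prod.snd) →
      φ = disjList ((bs.map (fun b => Conc b.1)).dedup) →
      (∀ b ∈ bs, WF D (insert b.2 F) b.1) →
      (∀ b ∈ bs, hsubArgs b.1 = []) →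
      WF D F (.rbc a bs φ)

/-- An argument is consistent iff `†A ⊬ ⊥`. -/
def ArgConsistent (A : Arg) : Prop := ¬ Entails {dagger A} .bot

/-- `Arg(AT)`: the consistent well-formed arguments of the theory `(D,F)`. -/
def ArgAT (D : Set Rule) (F : Set PForm) : Set Arg :=
  {A | WF D F A ∧ ArgConsistent A}

/-- `Arg^φ(AT) = Arg(D, F ∪ {φ}) \ Arg(D, F)`. -/
def ArgHyp (D : Set Rule) (F : Set PForm) (φ : PForm) : Set Arg :=
  ArgAT D (insert φ F) \ ArgAT D F

/-- `HArg(AT)`: hypothetical arguments based on an assumption used in some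
rbc-argument of the theory. -/
def HArgAT (D : Set Rule) (F : Set PForm) : Set Arg :=
  {A | ∃ φ : PForm, A ∈ ArgHyp D F φ ∧
    ∃ B ∈ ArgAT D F, ∃ p ∈ hsubArgs B, p.2 = φ}

/-- `B` ends in a defeasible rule application. -/
def IsDefApp : Arg → Prop
  | .defeas _ _ => True
  | _ => False

/-- Conflicting conclusions: one is the classical negation of the other. -/
def Conflicts (A B : Arg) : Prop :=
  Conc A = .neg (Conc B) ∨ Conc B = .neg (Conc A)

/-- Direct attack in the SAF of the theory `(D,F)`. -/
def DirectAttack (D : Set Rule) (F : Set PForm) (A B : Arg) : Prop :=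
  IsDefApp B ∧ Conflicts A B ∧
    ((A ∈ ArgAT D F ∧ B ∈ ArgAT D F) ∨
     (A ∈ ArgAT D F ∧ B ∈ HArgAT D F) ∨
     (∃ φ : PForm, φ ∉ F ∧ A ∈ ArgHyp D F φ ∧ B ∈ ArgHyp D F φ))

/-- The attack relation, lifted to sub-arguments and hypothetical
sub-arguments. -/
inductive Attacks (D : Set Rule) (F : Set PForm) : Arg → Arg → Prop
  | direct {A B : Arg} : DirectAttack D F A B → Attacks D F A B
  | sub {A B C : Arg} : C ∈ subArgs B → C ≠ B → Attacks D F A C → Attacks D F A B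
  | hsub {A B C : Arg} {ψ : PForm} : (C, ψ) ∈ hsubArgs B → Attacks D F A C →
      Attacks D F A B

/-- The set of arguments of the SAF of `(D,F)`. -/
def SAFArgs (D : Set Rule) (F : Set PForm) : Set Arg :=
  ArgAT D F ∪ HArgAT D F

/-- `E` is conflict-free. -/
def ConflictFree (att : Arg → Arg → Prop) (E : Set Arg) : Prop :=
  ∀ A ∈ E, ∀ B ∈ E, ¬ att A B

/-- `E` defends `A` within the universe `U`. -/
def Defends (U : Set Arg) (att : Arg → Arg → Prop) (E : Set Arg) (A : Arg) :
    Prop :=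
  ∀ B ∈ U, att B A → ∃ C ∈ E, att C B

/-- `E` is a complete extension of the framework with universe `U`. -/
def CompleteExt (U : Set Arg) (att : Arg → Arg → Prop) (E : Set Arg) : Prop :=
  E ⊆ U ∧ ConflictFree att E ∧ ∀ A ∈ U, (A ∈ E ↔ Defends U att E A)

/-- Poole's broken-arm theory: rules `{w ⇒ ¬r}` (l = atom 0, r = atom 1,
w = atom 2). -/
def Darm : Set Rule := {([.atom 2], .neg (.atom 1))}

/-- The knowledge base `{l ∨ r, w}`. -/
def Farm : Set PForm := {.disj (.atom 0) (.atom 1), .atom 2}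

/-- The argument `A = ⟨⟨⟨w⟩ ⇒ ¬r⟩, ⟨l ∨ r⟩ → l⟩`. -/
def armArg : Arg :=
  .strict [.defeas [.prem (.atom 2)] (.neg (.atom 1)),
           .prem (.disj (.atom 0) (.atom 1))] (.atom 0)

/-! ### Auxiliary material for the proof -/

/-- The intended valuation: `l` and `w` true, `r` false. -/
def v0 : ℕ → Prop := fun n => n ≠ 1

lemma eval_disjList (v : ℕ → Prop) :
    ∀ L : List PForm, (disjList L).eval v ↔ ∃ φ ∈ L, φ.eval v
  | [] => by simp [disjList, PForm.eval]
  | [φ] => by simp [disjList]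
  | φ :: ψ :: rest => by
      have ih := eval_disjList v (ψ :: rest)
      simp only [disjList, PForm.eval] at *
      rw [ih]
      simp

/-- Every well-formed argument over `Darm` and a `v0`-satisfied knowledge base
has a `v0`-true conclusion. -/
lemma conc_eval : ∀ {F : Set PForm} {X : Arg}, WF Darm F X →
    (∀ φ ∈ F, φ.eval v0) → (Conc X).eval v0 := by
  intro F X h
  induction h with
  | prem hφ => intro hF; exact hF _ hφ
  | strict hwf hent ih =>
      intro hF
      exact hent v0 (by rintro ψ ⟨a, ha, rfl⟩; exact ih a ha hF)
  | defeas hwf hD ih =>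
      intro hF
      simp only [Darm, Set.mem_singleton_iff, Prod.mk.injEq] at hD
      obtain ⟨-, rfl⟩ := hD
      simp [Conc, PForm.eval, v0]
  | rbc hwfa hlen hconc hφ hbs hhs iha ihbs =>
      intro hF
      have ha := iha hF
      rw [hconc, eval_disjList] at ha
      obtain ⟨ψ, hψmem, hψ⟩ := ha
      obtain ⟨b, hbmem, rfl⟩ := List.mem_map.mp hψmem
      have hb : (Conc b.1).eval v0 := by
        apply ihbs b hbmem
        intro φ' hφ'
        rcases hφ' with rfl | hφ'
        · exact hψ
        · exact hF _ hφ'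
      show (Conc (.rbc _ _ _)).eval v0
      simp only [Conc]
      rw [hφ, eval_disjList]
      exact ⟨Conc b.1, List.mem_dedup.mpr (List.mem_map.mpr ⟨b, hbmem, rfl⟩), hb⟩

lemma farm_eval : ∀ φ ∈ Farm, φ.eval v0 := by
  intro φ hφ
  rcases hφ with rfl | hφ
  · simp [PForm.eval, v0]
  · rcases hφ with rfl
    simp [PForm.eval, v0]

/-- The defeasible sub-argument `⟨⟨w⟩ ⇒ ¬r⟩`. -/
def D1 : Arg := .defeas [.prem (.atom 2)] (.neg (.atom 1))

lemma wf_D1 : WF Darm Farm D1 := by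
  apply WF.defeas
  · rintro a ha
    simp only [List.mem_singleton] at ha
    subst ha
    exact WF.prem (by right; rfl)
  · simp [Darm, Conc]

lemma consistent_of_conc_eval {A : Arg} (h : (dagger A).eval v0) :
    ArgConsistent A := by
  intro hent
  exact hent v0 (by rintro ψ rfl; exact h)

lemma D1_mem : D1 ∈ ArgAT Darm Farm := by
  refine ⟨wf_D1, consistent_of_conc_eval ?_⟩
  simp [D1, dagger, daggerList, conjList, PForm.eval, v0]

lemma wf_arm : WF Darm Farm armArg := by
  apply WF.strict
  · intro a ha
    simp only [List.mem_cons, List.mem_singleton] at ha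
    rcases ha with rfl | rfl | h
    · exact wf_D1
    · exact WF.prem (by left; rfl)
    · exact absurd h List.not_mem_nil
  · intro v hv
    have h1 := hv (.neg (.atom 1)) ⟨D1, by simp [D1], rfl⟩
    have h2 := hv (.disj (.atom 0) (.atom 1)) ⟨.prem (.disj (.atom 0) (.atom 1)), by simp, rfl⟩
    simp only [PForm.eval] at h1 h2 ⊢
    tauto

lemma arm_mem : armArg ∈ ArgAT Darm Farm := by
  refine ⟨wf_arm, consistent_of_conc_eval ?_⟩
  simp [armArg, D1, dagger, daggerList, conjList, PForm.eval, v0]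

/-- The sub-arguments of `armArg`. -/
def SubS (C : Arg) : Prop :=
  C = armArg ∨ C = D1 ∨ C = .prem (.atom 2) ∨ C = .prem (.disj (.atom 0) (.atom 1))

lemma no_attack_sub : ∀ {X C : Arg}, Attacks Darm Farm X C → SubS C → False := by
  intro X C h
  induction h with
  | @direct B hd =>
      intro hS
      obtain ⟨hdef, hconf, hcases⟩ := hd
      have hB : B = D1 := by
        rcases hS with rfl | rfl | rfl | rfl
        · exact absurd hdef (by simp [armArg, IsDefApp])
        · rfl
        · exact absurd hdef (by simp [IsDefApp])
        · exact absurd hdef (by simp [IsDefApp])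
      subst hB
      -- the attacker's conclusion is `r` or `¬¬r`, impossible under `v0`
      have hA : X ∈ ArgAT Darm Farm := by
        rcases hcases with ⟨hA, -⟩ | ⟨hA, hD⟩ | ⟨φ, -, -, hD⟩
        · exact hA
        · exact hA
        · exact absurd D1_mem hD.2
      have hev := conc_eval hA.1 farm_eval
      rcases hconf with hc | hc
      · rw [hc] at hev
        simp [Conc, D1, PForm.eval, v0] at hev
      · simp only [Conc, D1] at hc
        have hXc : Conc X = .atom 1 := (PForm.neg.injEq _ _ ▸ hc).symm
        rw [hXc] at hev
        simp [PForm.eval, v0] at hev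
  | @sub B C' hmem hne hatt ih =>
      intro hS
      apply ih
      simp only [SubS, armArg, D1] at hS ⊢
      rcases hS with rfl | rfl | rfl | rfl <;>
        · simp only [subArgs, subArgsList, List.mem_cons, List.mem_append,
            List.mem_singleton, List.not_mem_nil, or_false, List.append_nil] at hmem
          tauto
  | @hsub B C' ψ hmem hatt ih =>
      intro hS
      rcases hS with rfl | rfl | rfl | rfl <;>
        simp [armArg, D1, hsubArgs, hsubArgsList] at hmem

/-- `A` is a well-formed consistent argument, no argument of the framework
attacks it, and it belongs to every complete extension, so `l` is a grounded
consequence. -/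
theorem broken_arm :
    armArg ∈ ArgAT Darm Farm ∧
    (∀ B ∈ SAFArgs Darm Farm, ¬ Attacks Darm Farm B armArg) ∧
    (∀ E : Set Arg, CompleteExt (SAFArgs Darm Farm) (Attacks Darm Farm) E →
      armArg ∈ E) := by
  refine ⟨arm_mem, ?_, ?_⟩
  · intro B hB hatt
    exact no_attack_sub hatt (Or.inl rfl)
  · intro E ⟨hEU, hCF, hcomp⟩
    have hU : armArg ∈ SAFArgs Darm Farm := Or.inl arm_mem
    refine (hcomp armArg hU).mpr ?_
    intro B hBU hatt
    exact absurd hatt (fun h => no_attack_sub h (Or.inl rfl))
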